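/- If ψ : [0,∞) → [0,∞) is a nontrivial sub-root function with positive fixed point r*, and C > 0, then C·ψ is sub-root and its positive fixed point r̃* satisfies r̃* ≤ max(C², 1) · r*. -/

import Mathlib

theorem subroot_const_mul (ψ : ℝ → ℝ)
    (hnn : ∀ r, 0 ≤ r → 0 ≤ ψ r)
    (hmono : MonotoneOn ψ (Set.Ici 0))
    (hanti : AntitoneOn (fun r => ψ r / Real.sqrt r) (Set.Ioi 0))
    (hnontriv : ∃ r, 0 < r ∧ 0 < ψ r)
    (rstar : ℝ) (hrpos : 0 < rstar) (hfix : ψ rstar = rstar)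
    (C : ℝ) (hC : 0 < C) :
    (∀ r, 0 ≤ r → 0 ≤ C * ψ r) ∧
    MonotoneOn (fun r => C * ψ r) (Set.Ici 0) ∧
    AntitoneOn (fun r => (C * ψ r) / Real.sqrt r) (Set.Ioi 0) ∧
    (∀ rt, 0 < rt → C * ψ rt = rt → rt ≤ max (C ^ 2) 1 * rstar) := by
  refine ⟨fun r hr => mul_nonneg hC.le (hnn r hr),
    fun a ha b hb hab => mul_le_mul_of_nonneg_left (hmono ha hb hab) hC.le,
    fun a ha b hb hab => ?_, fun rt hrt hfix2 => ?_⟩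
  · simp only [mul_div_assoc]
    exact mul_le_mul_of_nonneg_left (hanti ha hb hab) hC.le
  · have hmax : (1:ℝ) ≤ max (C ^ 2) 1 := le_max_right _ _
    rcases le_or_gt rt rstar with h | h
    · calc rt ≤ rstar := h
        _ = 1 * rstar := (one_mul _).symm
        _ ≤ max (C ^ 2) 1 * rstar := by
            exact mul_le_mul_of_nonneg_right hmax hrpos.le
    · -- ψ rt / √rt ≤ ψ rstar / √rstar = √rstar
      have hkey : ψ rt / Real.sqrt rt ≤ ψ rstar / Real.sqrt rstar :=
        hanti (Set.mem_Ioi.mpr hrpos) (Set.mem_Ioi.mpr hrt) h.le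
      have hsq : Real.sqrt rstar * Real.sqrt rstar = rstar :=
        Real.mul_self_sqrt hrpos.le
      have hrs : ψ rstar / Real.sqrt rstar = Real.sqrt rstar := by
        rw [hfix]
        field_simp
        rw [Real.sq_sqrt hrpos.le]
      have hψrt : ψ rt ≤ Real.sqrt rstar * Real.sqrt rt := by
        have hsrt : (0:ℝ) < Real.sqrt rt := Real.sqrt_pos.mpr hrt
        have := hkey.trans_eq hrs
        calc ψ rt = (ψ rt / Real.sqrt rt) * Real.sqrt rt := by field_simp
          _ ≤ Real.sqrt rstar * Real.sqrt rt :=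
            mul_le_mul_of_nonneg_right this hsrt.le
      have h1 : rt ≤ C * (Real.sqrt rstar * Real.sqrt rt) := by
        calc rt = C * ψ rt := hfix2.symm
          _ ≤ C * (Real.sqrt rstar * Real.sqrt rt) :=
            mul_le_mul_of_nonneg_left hψrt hC.le
      have hsrt : (0:ℝ) < Real.sqrt rt := Real.sqrt_pos.mpr hrt
      have h2 : Real.sqrt rt ≤ C * Real.sqrt rstar := by
        have hrt_eq : rt = Real.sqrt rt * Real.sqrt rt := (Real.mul_self_sqrt hrt.le).symm
        nlinarith
      have h3 : rt ≤ C ^ 2 * rstar := by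
        have := mul_le_mul h2 h2 hsrt.le (by positivity)
        rw [Real.mul_self_sqrt hrt.le] at this
        nlinarith [Real.sq_sqrt hrpos.le]
      exact h3.trans (mul_le_mul_of_nonneg_right (le_max_left _ _) hrpos.le)
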